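/- Let a = (a_1,...,a_K) ∈ F_q^K and let A be the m × mK block-diagonal matrix with m copies of a on the diagonal. Let n = mK and 2ε < m. Let Q ∈ F_q^{m×(m-2ε)} be such that Q^T generates an [m, m-2ε] MDS code over F_q. Then, letting A^{(e)} = [A | Q] and C_H = (C_{A^{(e)}})^{[n]} (shortening of the code generated by the rows of A^{(e)} to the first n coordinates), the code C_H is an [n, 2ε] maximally recoverable subcode of the code C_A generated by the rows of A. -/

import Mathlib

open Matrix

section Defs
variable {F : Type*} [Field F]

/-- Rank of the submatrix of `G` consisting of the columns indexed by `S`. -/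
noncomputable def colRank {m α : Type*} [Fintype α] (G : Matrix m α F) (S : Finset α) : ℕ :=
  (G.submatrix id (fun j : S => (j : α))).rank

/-- The row space of a matrix. -/
def rowSpan {m α : Type*} (G : Matrix m α F) : Submodule F (α → F) :=
  Submodule.span F (Set.range fun i => G i)

/-- Rank of the restriction (puncturing) of a code `C` to the coordinates in `S`. -/
noncomputable def restrRank {α : Type*} (C : Submodule F (α → F)) (S : Finset α) : ℕ :=
  Module.finrank F (C.map (LinearMap.funLeft F F (fun j : S => (j : α))))

/-- Shortening of a code on coordinates `α ⊕ β` to the coordinates `α`. -/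
noncomputable def shortenSum {α β : Type*} (D : Submodule F ((α ⊕ β) → F)) :
    Submodule F (α → F) :=
  Submodule.map (LinearMap.funLeft F F Sum.inl)
    (D ⊓ (⨅ j : β, LinearMap.ker
      (LinearMap.proj (R := F) (Sum.inr j) : ((α ⊕ β) → F) →ₗ[F] F)))

/-- A valid (zero-error, worst case) scheme for the point-to-point function-update problem. -/
def IsValidScheme [DecidableEq F] {n m ℓ : ℕ} (A : Matrix (Fin m) (Fin n) F)
    (H : Matrix (Fin ℓ) (Fin n) F) (ε : ℕ)
    (D : (Fin ℓ → F) → (Fin m → F) → (Fin m → F)) : Prop :=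
  ∀ X E : Fin n → F, hammingNorm E ≤ ε →
    D (H.mulVec (X + E)) (A.mulVec X) = A.mulVec (X + E)

end Defs
section Helpers
variable {F : Type*} [Field F]

lemma rank_col_submatrix_le {r l s : Type*} [Fintype r] [Fintype l] [Fintype s]
    [DecidableEq l] (M : Matrix r l F) (g : s → l) :
    (M.submatrix id g).rank ≤ M.rank := by
  classical
  apply Submodule.finrank_mono
  rintro y ⟨x, rfl⟩
  refine ⟨fun j => ∑ t, if g t = j then x t else 0, ?_⟩
  funext i
  calc M.mulVecLin (fun j => ∑ t, if g t = j then x t else 0) i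
      = ∑ j, ∑ t, if g t = j then M i j * x t else 0 := by
        simp [Matrix.mulVecLin_apply, Matrix.mulVec, dotProduct,
          Finset.mul_sum, mul_ite]
    _ = ∑ t, ∑ j, if g t = j then M i j * x t else 0 := Finset.sum_comm
    _ = ∑ t, M i (g t) * x t := by simp
    _ = (M.submatrix id g).mulVecLin x i := by
        simp [Matrix.mulVecLin_apply, Matrix.mulVec, dotProduct]

lemma mulVecLin_ker_of_rank {r s : Type*} [Fintype r] [Fintype s] (N : Matrix r s F)
    (h : N.rank = Fintype.card s) : LinearMap.ker N.mulVecLin = ⊥ := by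
  have h2 := LinearMap.finrank_range_add_finrank_ker N.mulVecLin
  rw [Module.finrank_pi] at h2
  have h0 : Module.finrank F (LinearMap.ker N.mulVecLin) = 0 := by
    unfold Matrix.rank at h; omega
  exact Submodule.finrank_eq_zero.mp h0

end Helpers

/-- for the block-diagonal striping matrix `A` (m copies of the row
vector `a`) and an MDS extension `Q`, the shortening of the code generated by
`[A | Q]` to the first `n = mK` coordinates is a maximally recoverable subcode of
`C_A` (of dimension `2ε`, per Definition 1). -/
theorem striped_low_field_mrsc {F : Type*} [Field F] [Fintype F] {m K ε : ℕ}
    (hε : 2 * ε < m) (a : Fin K → F)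
    (A : Matrix (Fin m) (Fin m × Fin K) F)
    (hA : ∀ i j, A i j = if i = j.1 then a j.2 else 0)
    (Q : Matrix (Fin m) (Fin (m - 2 * ε)) F)
    (hMDS : ∀ T : Finset (Fin m), T.card = m - 2 * ε → colRank Qᵀ T = m - 2 * ε) :
    (∀ x ∈ shortenSum (rowSpan (Matrix.fromCols A Q)), x ∈ rowSpan A) ∧
      (∀ S : Finset (Fin m × Fin K), S.card = 2 * ε → colRank A S = 2 * ε →
        restrRank (shortenSum (rowSpan (Matrix.fromCols A Q))) S = 2 * ε) := by
  classical
  have hle : 2 * ε ≤ m := le_of_lt hε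
  set R : Matrix (Fin m) ((Fin m × Fin K) ⊕ Fin (m - 2 * ε)) F := Matrix.fromCols A Q with hR
  have hD : rowSpan R = LinearMap.range R.vecMulLinear := by
    rw [rowSpan]; exact (range_vecMulLinear R).symm
  have hDA : rowSpan A = LinearMap.range A.vecMulLinear := by
    rw [rowSpan]; exact (range_vecMulLinear A).symm
  set L := Q.vecMulLinear with hL
  -- the shortened intersection is the image of ker L
  have hDK : (rowSpan R ⊓ (⨅ j : Fin (m - 2 * ε), LinearMap.ker
        (LinearMap.proj (R := F) (Sum.inr j) :
          (((Fin m × Fin K) ⊕ Fin (m - 2 * ε)) → F) →ₗ[F] F)))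
      = Submodule.map R.vecMulLinear (LinearMap.ker L) := by
    ext y
    simp only [Submodule.mem_inf, Submodule.mem_iInf, LinearMap.mem_ker,
      LinearMap.proj_apply, Submodule.mem_map, hD, LinearMap.mem_range]
    constructor
    · rintro ⟨⟨c, rfl⟩, hk⟩
      refine ⟨c, ?_, rfl⟩
      funext t
      have := hk t
      simpa [Matrix.vecMulLinear_apply, Matrix.vecMul, dotProduct,
        Matrix.fromCols_apply_inr, hL, hR] using this
    · rintro ⟨c, hc, rfl⟩
      refine ⟨⟨c, rfl⟩, fun t => ?_⟩
      have := congrFun hc t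
      simpa [Matrix.vecMulLinear_apply, Matrix.vecMul, dotProduct,
        Matrix.fromCols_apply_inr, hL, hR] using this
  constructor
  · rintro x ⟨y, ⟨hyD, _⟩, rfl⟩
    rw [hD] at hyD
    obtain ⟨c, rfl⟩ := hyD
    rw [hDA]
    refine ⟨c, ?_⟩
    funext j
    simp [Matrix.vecMulLinear_apply, Matrix.vecMul, dotProduct,
      LinearMap.funLeft_apply, hR, Matrix.fromCols_apply_inl]
  · intro S hcard hrank
    -- rank of Qᵀ
    have hQrank : Qᵀ.rank = m - 2 * ε := by
      refine le_antisymm (by simpa using Qᵀ.rank_le_card_height) ?_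
      obtain ⟨T₀, -, hT₀⟩ := Finset.exists_subset_card_eq
        (s := (Finset.univ : Finset (Fin m))) (n := m - 2 * ε)
        (by simpa using Nat.sub_le m (2 * ε))
      calc m - 2 * ε = colRank Qᵀ T₀ := (hMDS T₀ hT₀).symm
        _ ≤ Qᵀ.rank := rank_col_submatrix_le Qᵀ _
    have hkerL : Module.finrank F (LinearMap.ker L) = 2 * ε := by
      have h2 := LinearMap.finrank_range_add_finrank_ker L
      rw [Module.finrank_pi] at h2
      have hr : Module.finrank F (LinearMap.range L) = m - 2 * ε := by
        rw [hL, ← Matrix.mulVecLin_transpose]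
        exact hQrank
      simp only [Fintype.card_fin] at h2
      omega
    -- the submatrix of A
    set M := A.submatrix id (fun s : S => (s : Fin m × Fin K)) with hM
    have hMker : LinearMap.ker M.mulVecLin = ⊥ := by
      apply mulVecLin_ker_of_rank
      rw [Fintype.card_coe, hcard]
      exact hrank
    have hMinj : Function.Injective M.mulVecLin := LinearMap.ker_eq_bot.mp hMker
    have ha : ∀ s : S, a (s : Fin m × Fin K).2 ≠ 0 := by
      intro s h0
      have h1 : M.mulVecLin (Pi.single s (1 : F)) = M.mulVecLin 0 := by
        rw [map_zero]
        funext i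
        simp [Matrix.mulVecLin_apply, Matrix.mulVec_single, hM, hA, h0]
      have := congrFun (hMinj h1) s
      simp at this
    have hfstinj : Set.InjOn Prod.fst (S : Set (Fin m × Fin K)) := by
      intro s hs s' hs' hfst
      by_contra hne
      have hss : (⟨s, hs⟩ : S) ≠ ⟨s', hs'⟩ := by simp [Subtype.ext_iff, hne]
      have h1 : M.mulVecLin (Pi.single (⟨s, hs⟩ : S) (a s'.2)
          + Pi.single (⟨s', hs'⟩ : S) (-(a s.2))) = M.mulVecLin 0 := by
        rw [map_zero, map_add]
        funext i
        simp only [Pi.add_apply, Matrix.mulVecLin_apply, Matrix.mulVec_single, hM,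
          Matrix.submatrix_apply, id, hA, Pi.zero_apply]
        simp only [Pi.smul_apply, Matrix.col_apply, Matrix.submatrix_apply, id, hA, op_smul_eq_mul]
        rw [hfst]
        split_ifs <;> ring
      have h2 := congrFun (hMinj h1) (⟨s, hs⟩ : S)
      simp [Pi.single_apply, hss] at h2
      exact ha ⟨s', hs'⟩ h2
    set J := S.image Prod.fst with hJdef
    have hJ : J.card = 2 * ε := by rw [hJdef, Finset.card_image_of_injOn hfstinj, hcard]
    set T : Finset (Fin m) := Jᶜ with hTdef
    have hT : T.card = m - 2 * ε := by
      rw [hTdef, Finset.card_compl, hJ, Fintype.card_fin]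
    set N := Qᵀ.submatrix id (fun t : T => (t : Fin m)) with hN
    have hNker : LinearMap.ker N.mulVecLin = ⊥ := by
      apply mulVecLin_ker_of_rank
      rw [Fintype.card_coe, hT]
      exact hMDS T hT
    -- key injectivity on ker L
    have hker : ∀ c ∈ LinearMap.ker L, (∀ s ∈ S, c s.1 = 0) → c = 0 := by
      intro c hc hcJ
      have hcJ' : ∀ i ∉ T, c i = 0 := by
        intro i hi
        rw [hTdef, Finset.mem_compl, not_not, hJdef, Finset.mem_image] at hi
        obtain ⟨s, hs, rfl⟩ := hi
        exact hcJ s hs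
      have hx : N.mulVecLin (fun t : T => c t) = 0 := by
        funext r
        have h0 : Matrix.vecMul c Q r = 0 := congrFun (LinearMap.mem_ker.mp hc) r
        have hsum : ∑ t : T, Q (t : Fin m) r * c (t : Fin m)
            = ∑ i ∈ T, Q i r * c i := Finset.sum_coe_sort T (fun i => Q i r * c i)
        calc N.mulVecLin (fun t : T => c t) r
            = ∑ t : T, Q (t : Fin m) r * c (t : Fin m) := by
              simp [Matrix.mulVecLin_apply, Matrix.mulVec, dotProduct, hN]
          _ = ∑ i ∈ T, Q i r * c i := hsum
          _ = ∑ i, Q i r * c i := by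
              apply Finset.sum_subset (Finset.subset_univ T)
              intro i _ hi
              rw [hcJ' i hi, mul_zero]
          _ = Matrix.vecMul c Q r := by
              simp [Matrix.vecMul, dotProduct, mul_comm]
          _ = 0 := h0
      have hx0 : (fun t : T => c t) = 0 := by
        have hmem : (fun t : T => c t) ∈ LinearMap.ker N.mulVecLin := hx
        rw [hNker, Submodule.mem_bot] at hmem
        exact hmem
      funext i
      by_cases hi : i ∈ T
      · exact congrFun hx0 ⟨i, hi⟩
      · exact hcJ' i hi
    -- the restricted code as an image
    set Ψ : (Fin m → F) →ₗ[F] (S → F) :=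
      (LinearMap.funLeft F F (fun s : S => (s : Fin m × Fin K))).comp A.vecMulLinear with hΨ
    have hcode : (shortenSum (rowSpan R)).map
          (LinearMap.funLeft F F (fun j : S => (j : Fin m × Fin K)))
        = Submodule.map Ψ (LinearMap.ker L) := by
      rw [shortenSum, hDK, ← Submodule.map_comp, ← Submodule.map_comp]
      congr 1
    rw [restrRank, hcode]
    have hrange : Submodule.map Ψ (LinearMap.ker L)
        = LinearMap.range (Ψ.comp (LinearMap.ker L).subtype) := by
      rw [LinearMap.range_comp, Submodule.range_subtype]
    rw [hrange, LinearMap.finrank_range_of_inj, hkerL]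
    rw [← LinearMap.ker_eq_bot]
    rw [Submodule.eq_bot_iff]
    rintro ⟨c, hc⟩ hv
    have hΨc : ∀ s : S, Matrix.vecMul c A (s : Fin m × Fin K) = 0 := by
      intro s
      have := congrFun (LinearMap.mem_ker.mp hv) s
      simpa [hΨ, LinearMap.funLeft_apply, Matrix.vecMulLinear_apply] using this
    have hcJ : ∀ s ∈ S, c s.1 = 0 := by
      intro s hs
      have h1 := hΨc ⟨s, hs⟩
      have h2 : Matrix.vecMul c A s = c s.1 * a s.2 := by
        simp [Matrix.vecMul, dotProduct, hA, mul_ite]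
      rw [h2] at h1
      exact (mul_eq_zero.mp h1).resolve_right (ha ⟨s, hs⟩)
    have := hker c hc hcJ
    exact Subtype.ext this
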